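/- Let V : [0,∞) → ℝ≥0 be locally absolutely continuous and p : ℝ≥0 → ℝ≥0 continuous with p(r) > r for r > 0. Suppose that for almost every t, if p(V(t)) ≥ sup_{s∈[max(t-Δ,0), t]} V(s) then V'(t) ≤ -α₃(V(t)), where α₃ is continuous positive definite and Δ > 0. Then V(t) ≤ sup_{s∈[0,Δ]} V(s) for all t ≥ 0, and V(t) → 0 as t → ∞. -/

import Mathlib

open Set MeasureTheory intervalIntegral Filter
open scoped ENNReal NNReal

private lemma aux_II_mono {V' : ℝ → ℝ} {u₁ u₂ : ℝ} (h0 : 0 ≤ u₁) (h : u₁ ≤ u₂)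
    (hI : IntervalIntegrable V' volume 0 u₂) : IntervalIntegrable V' volume 0 u₁ :=
  hI.mono_set (by
    rw [uIcc_of_le h0, uIcc_of_le (h0.trans h)]
    exact Icc_subset_Icc le_rfl h)

private lemma aux_II_tail {V' : ℝ → ℝ} {s t : ℝ} (hs : 0 ≤ s) (hst : s ≤ t)
    (hI : IntervalIntegrable V' volume 0 t) : IntervalIntegrable V' volume s t :=
  hI.mono_set (by
    rw [uIcc_of_le (hs.trans hst), uIcc_of_le hst]
    exact Icc_subset_Icc hs le_rfl)

private lemma aux_ftc_sub {V V' : ℝ → ℝ}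
    (hFTC : ∀ t : ℝ, 0 ≤ t → V t - V 0 = ∫ s in (0:ℝ)..t, V' s)
    {s t : ℝ} (hs : 0 ≤ s) (hst : s ≤ t)
    (hIs : IntervalIntegrable V' volume 0 s) (hIst : IntervalIntegrable V' volume s t) :
    V t - V s = ∫ r in s..t, V' r := by
  have h1 := hFTC s hs
  have h2 := hFTC t (hs.trans hst)
  have h3 := intervalIntegral.integral_add_adjacent_intervals hIs hIst
  linarith

/-- Key decrease lemma: if `V' ≤ c ≤ 0` a.e. on `(s,t)` then `V t - V s ≤ c (t - s)`. -/
private lemma aux_decrease (V V' : ℝ → ℝ)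
    (hVnonneg : ∀ t : ℝ, 0 ≤ t → 0 ≤ V t)
    (hderiv : ∀ᵐ t ∂(volume.restrict (Ici (0:ℝ))), HasDerivAt V (V' t) t)
    (hFTC : ∀ t : ℝ, 0 ≤ t → V t - V 0 = ∫ s in (0:ℝ)..t, V' s)
    {s t c : ℝ} (hs : 0 ≤ s) (hst : s ≤ t) (hc : c ≤ 0)
    (hbound : ∀ᵐ r ∂volume, r ∈ Ioo s t → V' r ≤ c) :
    V t - V s ≤ c * (t - s) := by
  rcases eq_or_lt_of_le hst with rfl | hst'
  · simp
  have hderiv' : ∀ᵐ r ∂volume, r ∈ Ici (0:ℝ) → HasDerivAt V (V' r) r :=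
    (ae_restrict_iff' measurableSet_Ici).mp hderiv
  have hjunk : ∀ u : ℝ, 0 ≤ u → ¬ IntervalIntegrable V' volume 0 u → V u = V 0 := by
    intro u hu hnu
    have h := hFTC u hu
    rw [intervalIntegral.integral_undef hnu] at h
    linarith
  by_cases hI : IntervalIntegrable V' volume 0 t
  · -- integrable case
    have hIs : IntervalIntegrable V' volume 0 s := aux_II_mono hs hst hI
    have hIst : IntervalIntegrable V' volume s t := aux_II_tail hs hst hI
    rw [aux_ftc_sub hFTC hs hst hIs hIst]
    have h2 : ∀ᵐ r ∂volume, r ∈ Icc s t → r ∈ Ioo s t := by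
      have hsub : {r : ℝ | ¬ (r ∈ Icc s t → r ∈ Ioo s t)} ⊆ {s, t} := by
        intro r hr
        simp only [mem_setOf_eq, Classical.not_imp] at hr
        obtain ⟨h1, h2⟩ := hr
        rcases eq_or_lt_of_le h1.1 with h | h
        · exact Or.inl h.symm
        rcases eq_or_lt_of_le h1.2 with h' | h'
        · exact Or.inr h'
        exact absurd ⟨h, h'⟩ h2
      refine ae_iff.mpr (measure_mono_null hsub ?_)
      rw [Set.insert_eq]
      exact measure_union_null (measure_singleton s) (measure_singleton t)
    have hmono : ∫ r in s..t, V' r ≤ ∫ r in s..t, (fun _ => c) r := by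
      refine intervalIntegral.integral_mono_ae_restrict hst hIst intervalIntegrable_const ?_
      filter_upwards [ae_restrict_of_ae hbound, ae_restrict_of_ae h2,
        ae_restrict_mem measurableSet_Icc] with r h1 h2 h3
      exact h1 (h2 h3)
    calc ∫ r in s..t, V' r ≤ ∫ r in s..t, (fun _ => c) r := hmono
      _ = c * (t - s) := by rw [intervalIntegral.integral_const, smul_eq_mul, mul_comm]
  · -- non-integrable case: derive the conclusion (or a contradiction)
    by_cases hIs : IntervalIntegrable V' volume 0 s
    · -- contradiction
      exfalso
      have htBad : t ∈ {u : ℝ | u ∈ Icc s t ∧ ¬ IntervalIntegrable V' volume 0 u} :=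
        ⟨⟨hst, le_rfl⟩, hI⟩
      set Bad := {u : ℝ | u ∈ Icc s t ∧ ¬ IntervalIntegrable V' volume 0 u} with hBadDef
      have hBadne : Bad.Nonempty := ⟨t, htBad⟩
      have hbdd : BddBelow Bad := ⟨s, fun u hu => hu.1.1⟩
      set v := sInf Bad with hvdef
      have hsv : s ≤ v := le_csInf hBadne (fun u hu => hu.1.1)
      have hvt : v ≤ t := csInf_le hbdd htBad
      have hv0 : 0 ≤ v := hs.trans hsv
      have h_lt : ∀ w, s ≤ w → w < v → IntervalIntegrable V' volume 0 w := by
        intro w hw hwv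
        by_contra hnw
        exact absurd (csInf_le hbdd ⟨⟨hw, hwv.le.trans hvt⟩, hnw⟩) (not_le.mpr hwv)
      have h_gt : ∀ u, v < u → u ≤ t → ¬ IntervalIntegrable V' volume 0 u := by
        intro u hvu hut hIu
        have huv : u ≤ v := le_csInf hBadne (fun x hx => by
          by_contra hxu
          exact hx.2 (aux_II_mono (hs.trans hx.1.1) (le_of_not_ge hxu) hIu))
        exact absurd (lt_of_lt_of_le hvu huv) (lt_irrefl _)
      -- V' is integrable on [0, v]
      have hIv : IntervalIntegrable V' volume 0 v := by
        rcases eq_or_lt_of_le hsv with heq | hsv'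
        · rwa [← heq]
        -- monotone convergence argument
        set g : ℝ → ℝ≥0∞ := fun r => (‖deriv V r‖₊ : ℝ≥0∞) with hgdef
        have hgmeas : Measurable g := (measurable_deriv V).nnnorm.coe_nnreal_ennreal
        set w : ℕ → ℝ := fun n => v - (v - s)/(n+1) with hwdef
        have hwmem : ∀ n : ℕ, s ≤ w n ∧ w n < v := by
          intro n
          have hn0 : (0:ℝ) ≤ (n:ℝ) := Nat.cast_nonneg n
          have hn1 : (1:ℝ) ≤ (n:ℝ) + 1 := by linarith
          constructor
          · have h1 : (v - s)/((n:ℝ)+1) ≤ v - s :=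
              div_le_self (by linarith) hn1
            simp only [hwdef]; linarith
          · have h2 : 0 < (v - s)/((n:ℝ)+1) :=
              div_pos (by linarith) (by positivity)
            simp only [hwdef]; linarith
        have hwmono : Monotone fun n : ℕ => Ioo s (w n) := by
          intro m n hmn
          apply Ioo_subset_Ioo le_rfl
          have h1 : (v - s)/((n:ℝ)+1) ≤ (v - s)/((m:ℝ)+1) := by
            apply div_le_div_of_nonneg_left (by linarith) (by positivity)
            exact_mod_cast by norm_cast; omega
          simp only [hwdef]; linarith
        have hUnion : (⋃ n, Ioo s (w n)) = Ioo s v := by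
          apply Subset.antisymm
          · exact iUnion_subset fun n => Ioo_subset_Ioo le_rfl (hwmem n).2.le
          · intro x hx
            obtain ⟨n, hn⟩ := exists_nat_gt ((v - s)/(v - x))
            refine mem_iUnion.mpr ⟨n, hx.1, ?_⟩
            have hvx : 0 < v - x := by linarith [hx.2]
            have hkey : (v - s)/((n:ℝ)+1) < v - x := by
              rw [div_lt_iff₀ (by positivity)]
              calc v - s = ((v-s)/(v-x)) * (v - x) := by field_simp
                _ < ((n:ℝ)+1) * (v-x) :=
                    mul_lt_mul_of_pos_right (by linarith) hvx
                _ = (v-x) * ((n:ℝ)+1) := mul_comm _ _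
            simp only [hwdef]; linarith
        have hbd : ∀ n : ℕ, (volume.withDensity g) (Ioo s (w n)) ≤ ENNReal.ofReal (V s) := by
          intro n
          obtain ⟨hs_w, hw_v⟩ := hwmem n
          have hIw : IntervalIntegrable V' volume 0 (w n) := h_lt _ hs_w hw_v
          have hIsw : IntervalIntegrable V' volume s (w n) := aux_II_tail hs hs_w hIw
          have hIOn : IntegrableOn V' (Ioo s (w n)) volume :=
            hIsw.1.mono_set Ioo_subset_Ioc_self
          rw [withDensity_apply g measurableSet_Ioo]
          have heq1 : ∫⁻ r in Ioo s (w n), g r = ∫⁻ r in Ioo s (w n), (‖V' r‖₊ : ℝ≥0∞) := by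
            apply lintegral_congr_ae
            filter_upwards [ae_restrict_of_ae hderiv', ae_restrict_mem measurableSet_Ioo]
              with r hr hrm
            have hd := (hr (hs.trans hrm.1.le)).deriv
            simp only [hgdef, hd]
          have heq3 : ∫ r in Ioo s (w n), ‖V' r‖ = - ∫ r in Ioo s (w n), V' r := by
            rw [← MeasureTheory.integral_neg]
            apply setIntegral_congr_ae measurableSet_Ioo
            filter_upwards [hbound] with r hr hrm
            have hVc : V' r ≤ c := hr (Ioo_subset_Ioo le_rfl (hw_v.le.trans hvt) hrm)
            rw [Real.norm_eq_abs, abs_of_nonpos (hVc.trans hc)]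
          have heq4 : ∫ r in Ioo s (w n), V' r = V (w n) - V s := by
            rw [← MeasureTheory.integral_Ioc_eq_integral_Ioo,
              ← intervalIntegral.integral_of_le hs_w]
            exact (aux_ftc_sub hFTC hs hs_w hIs hIsw).symm
          rw [heq1]; simp only [← enorm_eq_nnnorm]; rw [← ofReal_integral_norm_eq_lintegral_enorm hIOn, heq3, heq4]
          apply ENNReal.ofReal_le_ofReal
          have h5 := hVnonneg (w n) (hs.trans hs_w)
          linarith
        have hfin : (volume.withDensity g) (Ioo s v) < ⊤ := by
          rw [← hUnion, hwmono.directed_le.measure_iUnion]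
          exact lt_of_le_of_lt (iSup_le hbd) ENNReal.ofReal_lt_top
        have hmeasae : ∀ᵐ r ∂(volume.restrict (Ioo s v)), deriv V r = V' r := by
          filter_upwards [ae_restrict_of_ae hderiv', ae_restrict_mem measurableSet_Ioo]
            with r hr hrm
          exact (hr (hs.trans hrm.1.le)).deriv
        have hmeasV' : AEStronglyMeasurable V' (volume.restrict (Ioo s v)) :=
          (measurable_deriv V).aestronglyMeasurable.congr hmeasae
        have hIOnv : IntegrableOn V' (Ioo s v) volume := by
          refine ⟨hmeasV', ?_⟩
          rw [withDensity_apply g measurableSet_Ioo] at hfin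
          have heq : ∫⁻ r in Ioo s v, (‖V' r‖₊ : ℝ≥0∞) = ∫⁻ r in Ioo s v, g r := by
            apply lintegral_congr_ae
            filter_upwards [hmeasae] with r hr
            simp only [hgdef, hr]
          show (∫⁻ r in Ioo s v, (‖V' r‖₊ : ℝ≥0∞)) < ⊤
          rw [heq]; exact hfin
        have hIsv : IntervalIntegrable V' volume s v := by
          rw [intervalIntegrable_iff, uIoc_of_le hsv]
          have hsub2 : (Ioc s v : Set ℝ) ⊆ Ioo s v ∪ {v} := by
            intro x hx
            rcases eq_or_lt_of_le hx.2 with h | h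
            · exact Or.inr (by simp [h])
            · exact Or.inl ⟨hx.1, h⟩
          have hv1 : IntegrableOn V' ({v} : Set ℝ) volume := by
            unfold IntegrableOn
            rw [Measure.restrict_eq_zero.mpr (by simp)]
            exact integrable_zero_measure
          exact (hIOnv.union hv1).mono_set hsub2
        exact hIs.trans hIsv
      rcases eq_or_lt_of_le hvt with heq | hvt'
      · exact hI (heq ▸ hIv)
      · have hconst2 : ∀ u, v < u → u ≤ t → V u = V 0 := fun u h1 h2 =>
          hjunk u (hv0.trans h1.le) (h_gt u h1 h2)
        have hzero2 : ∀ᵐ r ∂volume, r ∈ Ioo v t → V' r = 0 := by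
          filter_upwards [hderiv'] with r hr hrm
          have hd := hr (le_of_lt (lt_of_le_of_lt hv0 hrm.1))
          have hnb : (fun _ : ℝ => V 0) =ᶠ[nhds r] V := by
            filter_upwards [Ioo_mem_nhds hrm.1 hrm.2] with x hx
            exact (hconst2 x hx.1 hx.2.le).symm
          exact (hd.congr_of_eventuallyEq hnb).unique (hasDerivAt_const r (V 0))
        have hIvt : IntervalIntegrable V' volume v t := by
          rw [intervalIntegrable_iff, uIoc_of_le hvt'.le]
          have h2 : ∀ᵐ r ∂volume, r ∈ Ioc v t → r ∈ Ioo v t := by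
            have hsub : {r : ℝ | ¬ (r ∈ Ioc v t → r ∈ Ioo v t)} ⊆ {t} := by
              intro r hr
              simp only [mem_setOf_eq, Classical.not_imp] at hr
              obtain ⟨h1, h2⟩ := hr
              rcases eq_or_lt_of_le h1.2 with h | h
              · exact h
              · exact absurd ⟨h1.1, h⟩ h2
            exact ae_iff.mpr (measure_mono_null hsub (measure_singleton t))
          apply (integrable_zero _ _ _).congr
          filter_upwards [ae_restrict_of_ae hzero2, ae_restrict_of_ae h2,
            ae_restrict_mem measurableSet_Ioc] with r h1 h2 h3
          exact (h1 (h2 h3)).symm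
        exact hI (hIv.trans hIvt)
    · -- V is constant on [s,t]
      have hconst : ∀ u, u ∈ Icc s t → V u = V 0 := by
        intro u hu
        exact hjunk u (hs.trans hu.1) (fun h => hIs (aux_II_mono hs hu.1 h))
      have hzero : ∀ᵐ r ∂volume, r ∈ Ioo s t → V' r = 0 := by
        filter_upwards [hderiv'] with r hr hrm
        have hd := hr (le_of_lt (lt_of_le_of_lt hs hrm.1))
        have hnb : (fun _ : ℝ => V 0) =ᶠ[nhds r] V := by
          filter_upwards [Ioo_mem_nhds hrm.1 hrm.2] with x hx
          exact (hconst x ⟨hx.1.le, hx.2.le⟩).symm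
        exact (hd.congr_of_eventuallyEq hnb).unique (hasDerivAt_const r (V 0))
      have hc0 : 0 ≤ c := by
        have hne' : volume.restrict (Ioo s t) ≠ 0 := by
          rw [Ne, Measure.restrict_eq_zero, Real.volume_Ioo]
          simp only [ENNReal.ofReal_eq_zero, not_le]
          linarith
        haveI : (ae (volume.restrict (Ioo s t))).NeBot := ae_neBot.mpr hne'
        have hb' : ∀ᵐ r ∂(volume.restrict (Ioo s t)), V' r ≤ c ∧ V' r = 0 := by
          filter_upwards [ae_restrict_of_ae hbound, ae_restrict_of_ae hzero,
            ae_restrict_mem measurableSet_Ioo] with r h1 h2 h3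
          exact ⟨h1 h3, h2 h3⟩
        obtain ⟨r, hr1, hr2⟩ := hb'.exists
        rw [hr2] at hr1
        exact hr1
      have h1 := hconst t ⟨hst, le_rfl⟩
      have h2 := hconst s ⟨le_rfl, hst⟩
      have hcc : c = 0 := le_antisymm hc hc0
      rw [h1, h2, hcc]
      ring_nf
      exact le_rfl

/-- Barrier lemma: if `V' ≤ 0` whenever `V` is above level `μ` (after time `τ`), then
`V` can never exceed `μ` after `τ`. -/
private lemma aux_noRise (V V' : ℝ → ℝ)
    (hVnonneg : ∀ t : ℝ, 0 ≤ t → 0 ≤ V t)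
    (hcont : ContinuousOn V (Ici 0))
    (hderiv : ∀ᵐ t ∂(volume.restrict (Ici (0:ℝ))), HasDerivAt V (V' t) t)
    (hFTC : ∀ t : ℝ, 0 ≤ t → V t - V 0 = ∫ s in (0:ℝ)..t, V' s)
    {τ μ : ℝ} (hτ : 0 ≤ τ) (hμ : V τ ≤ μ)
    (H : ∀ᵐ r ∂volume, τ < r → μ < V r → V' r ≤ 0) :
    ∀ t, τ ≤ t → V t ≤ μ := by
  intro t₁ ht₁
  by_contra hgt
  push_neg at hgt
  have ht₁' : τ < t₁ := by
    rcases eq_or_lt_of_le ht₁ with rfl | h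
    · exact absurd hμ (not_le.mpr hgt)
    · exact h
  set c' := (μ + V t₁)/2 with hc'def
  have hμc' : μ < c' := by simp only [hc'def]; linarith
  have hc't₁ : c' < V t₁ := by simp only [hc'def]; linarith
  set S := (Icc τ t₁) ∩ V ⁻¹' (Iic c') with hSdef
  have hSclosed : IsClosed S :=
    ContinuousOn.preimage_isClosed_of_isClosed
      (hcont.mono (fun x hx => hτ.trans hx.1)) isClosed_Icc isClosed_Iic
  have hSne : S.Nonempty := ⟨τ, ⟨le_rfl, ht₁'.le⟩, by
    simp only [mem_preimage, mem_Iic]; exact hμ.trans hμc'.le⟩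
  have hScompact : IsCompact S :=
    Metric.isCompact_of_isClosed_isBounded hSclosed
      ((Metric.isBounded_Icc τ t₁).subset inter_subset_left)
  set θ := sSup S with hθdef
  have hθS : θ ∈ S := hScompact.sSup_mem hSne
  have hθτ : τ ≤ θ := hθS.1.1
  have hθt₁ : θ ≤ t₁ := hθS.1.2
  have hVθ : V θ ≤ c' := hθS.2
  have hθlt : θ < t₁ :=
    lt_of_le_of_ne hθt₁ (fun h => absurd (h ▸ hVθ) (not_le.mpr hc't₁))
  have hmid : ∀ r, θ < r → r ≤ t₁ → c' < V r := by
    intro r h1 h2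
    by_contra hle
    push_neg at hle
    have hmem : r ∈ S := ⟨⟨hθτ.trans h1.le, h2⟩, hle⟩
    exact absurd (le_csSup hScompact.bddAbove hmem) (not_le.mpr h1)
  have hbound : ∀ᵐ r ∂volume, r ∈ Ioo θ t₁ → V' r ≤ 0 := by
    filter_upwards [H] with r hr hrm
    exact hr (lt_of_le_of_lt hθτ hrm.1) (hμc'.trans (hmid r hrm.1 hrm.2.le))
  have hdec := aux_decrease V V' hVnonneg hderiv hFTC (hτ.trans hθτ) hθlt.le le_rfl hbound
  rw [zero_mul] at hdec
  linarith

theorem stmt18 (Δ : ℝ) (hΔ : 0 < Δ)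
    (p α₃ : ℝ → ℝ)
    (hpcont : ContinuousOn p (Ici 0)) (hp : ∀ r : ℝ, 0 < r → r < p r)
    (hα₃cont : ContinuousOn α₃ (Ici 0)) (hα₃0 : α₃ 0 = 0)
    (hα₃pos : ∀ s : ℝ, 0 < s → 0 < α₃ s)
    (V V' : ℝ → ℝ)
    (hVnonneg : ∀ t : ℝ, 0 ≤ t → 0 ≤ V t)
    (hcont : ContinuousOn V (Ici 0))
    (hderiv : ∀ᵐ t ∂(volume.restrict (Ici (0:ℝ))), HasDerivAt V (V' t) t)
    (hFTC : ∀ t : ℝ, 0 ≤ t → V t - V 0 = ∫ s in (0:ℝ)..t, V' s)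
    (hRaz : ∀ᵐ t ∂(volume.restrict (Ici (0:ℝ))),
      sSup (V '' Icc (max (t - Δ) 0) t) ≤ p (V t) → V' t ≤ -α₃ (V t)) :
    (∀ t : ℝ, 0 ≤ t → V t ≤ sSup (V '' Icc 0 Δ)) ∧
    Tendsto V atTop (nhds 0) := by
  have hRaz' : ∀ᵐ r ∂volume, r ∈ Ici (0:ℝ) →
      (sSup (V '' Icc (max (r - Δ) 0) r) ≤ p (V r) → V' r ≤ -α₃ (V r)) :=
    (ae_restrict_iff' measurableSet_Ici).mp hRaz
  -- global boundedness : V t ≤ V 0 for t ≥ 0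
  have hbnd : ∀ t : ℝ, 0 ≤ t → V t ≤ V 0 := by
    intro T hT
    by_contra hgt
    push_neg at hgt
    have himgK : IsCompact (V '' Icc 0 T) :=
      isCompact_Icc.image_of_continuousOn (hcont.mono Icc_subset_Ici_self)
    set M := sSup (V '' Icc 0 T) with hMdef
    have himgne : (V '' Icc 0 T).Nonempty := ⟨V 0, 0, ⟨le_rfl, hT⟩, rfl⟩
    obtain ⟨t', ht'mem, ht'eq⟩ := himgK.sSup_mem himgne
    have hle_M : ∀ u, 0 ≤ u → u ≤ T → V u ≤ M := fun u h1 h2 =>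
      le_csSup himgK.bddAbove ⟨u, ⟨h1, h2⟩, rfl⟩
    have hVTM : V T ≤ M := hle_M T hT le_rfl
    have hM0 : V 0 < M := lt_of_lt_of_le hgt hVTM
    have hMpos : 0 < M := lt_of_le_of_lt (hVnonneg 0 le_rfl) hM0
    set m₀ := max (V 0) (M/2) with hm₀def
    have hm₀pos : 0 < m₀ := lt_of_lt_of_le (by linarith) (le_max_right _ _)
    have hm₀M : m₀ < M := max_lt hM0 (by linarith)
    obtain ⟨x₀, hx₀mem, hx₀min⟩ :=
      isCompact_Icc.exists_isMinOn ⟨m₀, le_rfl, hm₀M.le⟩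
        ((hpcont.mono (fun x hx => (hm₀pos.le).trans hx.1)).sub continuousOn_id)
    set a := p x₀ - x₀ with hadef
    have hapos : 0 < a := sub_pos.mpr (hp x₀ (lt_of_lt_of_le hm₀pos hx₀mem.1))
    have hminp : ∀ x, x ∈ Icc m₀ M → a ≤ p x - x := fun x hx =>
      isMinOn_iff.mp hx₀min x hx
    set c' := max m₀ (M - a) with hc'def
    have hc'M : c' < M := max_lt hm₀M (by linarith)
    have hm₀c' : m₀ ≤ c' := le_max_left _ _
    have hMc'a : M ≤ c' + a := by
      have := le_max_right m₀ (M - a); simp only [hc'def]; linarith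
    have ht'0 : (0:ℝ) ≤ t' := ht'mem.1
    set S := (Icc 0 t') ∩ V ⁻¹' (Iic c') with hSdef
    have hSclosed : IsClosed S :=
      ContinuousOn.preimage_isClosed_of_isClosed
        (hcont.mono (fun x hx => hx.1)) isClosed_Icc isClosed_Iic
    have hSne : S.Nonempty := ⟨0, ⟨le_rfl, ht'0⟩, by
      simp only [mem_preimage, mem_Iic]
      exact (le_max_left _ _).trans hm₀c'⟩
    have hScompact : IsCompact S :=
      Metric.isCompact_of_isClosed_isBounded hSclosed
        ((Metric.isBounded_Icc 0 t').subset inter_subset_left)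
    set θ := sSup S with hθdef
    have hθS : θ ∈ S := hScompact.sSup_mem hSne
    have hθ0 : 0 ≤ θ := hθS.1.1
    have hθt' : θ ≤ t' := hθS.1.2
    have hVθ : V θ ≤ c' := hθS.2
    have hθlt : θ < t' := by
      rcases eq_or_lt_of_le hθt' with h | h
      · exact absurd (h ▸ hVθ) (not_le.mpr (ht'eq ▸ hc'M))
      · exact h
    have hmid : ∀ r, θ < r → r ≤ t' → c' < V r := by
      intro r h1 h2
      by_contra hle
      push_neg at hle
      have hmem : r ∈ S := ⟨⟨hθ0.trans h1.le, h2⟩, hle⟩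
      exact absurd (le_csSup hScompact.bddAbove hmem) (not_le.mpr h1)
    have hbound : ∀ᵐ r ∂volume, r ∈ Ioo θ t' → V' r ≤ 0 := by
      filter_upwards [hRaz'] with r hr hrm
      have hr0 : (0:ℝ) ≤ r := hθ0.trans hrm.1.le
      have hrT : r ≤ T := hrm.2.le.trans ht'mem.2
      have hVrle : V r ≤ M := hle_M r hr0 hrT
      have hVrgt : c' < V r := hmid r hrm.1 hrm.2.le
      have hwinne : (Icc (max (r - Δ) 0) r).Nonempty :=
        ⟨max (r - Δ) 0, le_rfl, max_le (by linarith) hr0⟩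
      have hwin : sSup (V '' Icc (max (r - Δ) 0) r) ≤ M := by
        apply csSup_le (hwinne.image _)
        rintro y ⟨u, hu, rfl⟩
        exact hle_M u ((le_max_right _ _).trans hu.1) (hu.2.trans hrT)
      have hVr_m₀ : m₀ ≤ V r := hm₀c'.trans hVrgt.le
      have hpa : a ≤ p (V r) - V r := hminp _ ⟨hVr_m₀, hVrle⟩
      have hcond : sSup (V '' Icc (max (r - Δ) 0) r) ≤ p (V r) := by linarith
      have hα : 0 < α₃ (V r) := hα₃pos _ (lt_of_lt_of_le hm₀pos hVr_m₀)
      linarith [hr hr0 hcond]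
    have hdec := aux_decrease V V' hVnonneg hderiv hFTC hθ0 hθlt.le le_rfl hbound
    rw [zero_mul] at hdec
    rw [ht'eq] at hdec
    linarith
  -- first conclusion
  have himgKΔ : IsCompact (V '' Icc 0 Δ) :=
    isCompact_Icc.image_of_continuousOn (hcont.mono Icc_subset_Ici_self)
  have h0mem : V 0 ∈ V '' Icc 0 Δ := ⟨0, ⟨le_rfl, hΔ.le⟩, rfl⟩
  refine ⟨fun t ht => (hbnd t ht).trans (le_csSup himgKΔ.bddAbove h0mem), ?_⟩
  set B := V 0 with hBdef
  have hBnn : 0 ≤ B := hVnonneg 0 le_rfl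
  rcases eq_or_lt_of_le hBnn with hB0 | hBpos
  · have heq : V =ᶠ[atTop] (fun _ => (0:ℝ)) := by
      filter_upwards [eventually_ge_atTop (0:ℝ)] with t ht
      refine le_antisymm ?_ (hVnonneg t ht)
      have h := hbnd t ht
      rwa [← hB0] at h
    exact tendsto_const_nhds.congr' heq.symm
  -- key claim
  have key : ∀ ε : ℝ, 0 < ε → ε ≤ B → ∃ T : ℝ, 0 ≤ T ∧ ∀ t, T ≤ t → V t ≤ ε := by
    intro ε hε hεB
    set lo := ε/2 with hlodef
    have hlopos : 0 < lo := by positivity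
    have hloB : lo ≤ B := by simp only [hlodef]; linarith
    obtain ⟨x₀, hx₀mem, hx₀min⟩ :=
      isCompact_Icc.exists_isMinOn ⟨lo, le_rfl, hloB⟩
        ((hpcont.mono (fun x hx => hlopos.le.trans hx.1)).sub continuousOn_id)
    set a := p x₀ - x₀ with hadef
    have hapos : 0 < a := sub_pos.mpr (hp x₀ (lt_of_lt_of_le hlopos hx₀mem.1))
    have hminp : ∀ x, x ∈ Icc lo B → a ≤ p x - x := fun x hx =>
      isMinOn_iff.mp hx₀min x hx
    obtain ⟨y₀, hy₀mem, hy₀min⟩ :=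
      isCompact_Icc.exists_isMinOn ⟨lo, le_rfl, hloB⟩
        (hα₃cont.mono (fun x hx => hlopos.le.trans hx.1))
    set b := α₃ y₀ with hbdef
    have hbpos : 0 < b := hα₃pos y₀ (lt_of_lt_of_le hlopos hy₀mem.1)
    have hminb : ∀ x, x ∈ Icc lo B → b ≤ α₃ x := fun x hx =>
      isMinOn_iff.mp hy₀min x hx
    set δ := min a (ε/2) with hδdef
    have hδpos : 0 < δ := lt_min hapos (by positivity)
    have hδa : δ ≤ a := min_le_left _ _
    have hδε : δ ≤ ε/2 := min_le_right _ _
    -- one step of descent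
    have step : ∀ η T, ε ≤ η → η ≤ B → 0 ≤ T → (∀ t, T ≤ t → V t ≤ η) →
        ∃ T', 0 ≤ T' ∧ ∀ t, T' ≤ t → V t ≤ η - δ := by
      intro η T hεη hηB hT hbd
      have hμlo : lo ≤ η - δ := by simp only [hlodef]; linarith
      have Hae : ∀ᵐ r ∂volume, (T + Δ ≤ r → η - δ < V r → V' r ≤ -b) := by
        filter_upwards [hRaz'] with r hr hr1 hr2
        have hr0 : (0:ℝ) ≤ r := by linarith
        have hVrB : V r ≤ B := hbnd r hr0
        have hVrlo : lo ≤ V r := hμlo.trans hr2.le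
        have hmax : max (r - Δ) 0 = r - Δ := max_eq_left (by linarith)
        have hwinne : (Icc (max (r - Δ) 0) r).Nonempty :=
          ⟨max (r - Δ) 0, le_rfl, max_le (by linarith) hr0⟩
        have hwin : sSup (V '' Icc (max (r - Δ) 0) r) ≤ η := by
          apply csSup_le (hwinne.image _)
          rintro y ⟨u, hu, rfl⟩
          apply hbd u
          rw [hmax] at hu
          linarith [hu.1]
        have hpa : a ≤ p (V r) - V r := hminp _ ⟨hVrlo, hVrB⟩
        have hcond : sSup (V '' Icc (max (r - Δ) 0) r) ≤ p (V r) := by linarith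
        have hb' : b ≤ α₃ (V r) := hminb _ ⟨hVrlo, hVrB⟩
        linarith [hr hr0 hcond]
      set t₂ := T + Δ + (B + 1)/b with ht₂def
      have hq : 0 < (B + 1)/b := by positivity
      have hTΔt₂ : T + Δ ≤ t₂ := by simp only [ht₂def]; linarith
      have hdrop : ∃ τ, T + Δ ≤ τ ∧ τ ≤ t₂ ∧ V τ ≤ η - δ := by
        by_contra hno
        push_neg at hno
        have hbound2 : ∀ᵐ r ∂volume, r ∈ Ioo (T+Δ) t₂ → V' r ≤ -b := by
          filter_upwards [Hae] with r hr hrm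
          exact hr hrm.1.le (hno r hrm.1.le hrm.2.le)
        have hdec := aux_decrease V V' hVnonneg hderiv hFTC
          (by linarith) hTΔt₂ (by linarith) hbound2
        have h1 : V (T+Δ) ≤ B := hbnd _ (by linarith)
        have h2 : 0 ≤ V t₂ := hVnonneg _ (by linarith)
        have h4 : t₂ - (T+Δ) = (B+1)/b := by simp only [ht₂def]; ring
        have h3 : -b * (t₂ - (T+Δ)) = -(B+1) := by
          rw [h4]
          field_simp
        linarith
      obtain ⟨τ, hτ1, hτ2, hτ3⟩ := hdrop
      refine ⟨τ, by linarith, aux_noRise V V' hVnonneg hcont hderiv hFTC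
        (by linarith) hτ3 ?_⟩
      filter_upwards [Hae] with r hr h1 h2
      exact (hr (by linarith) h2).trans (by linarith)
    -- induction on levels
    have ind : ∀ n : ℕ, ∃ T, 0 ≤ T ∧ ∀ t, T ≤ t → V t ≤ max (B - n * δ) ε := by
      intro n
      induction n with
      | zero =>
        refine ⟨0, le_rfl, fun t ht => (hbnd t ht).trans ?_⟩
        simp only [Nat.cast_zero, zero_mul, sub_zero]
        exact le_max_left _ _
      | succ n ih =>
        obtain ⟨T, hT0, hT⟩ := ih
        by_cases hcase : B - n * δ ≤ ε
        · refine ⟨T, hT0, fun t ht => (hT t ht).trans ?_⟩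
          rw [max_eq_right hcase]
          exact le_max_right _ _
        · push_neg at hcase
          have hη : ∀ t, T ≤ t → V t ≤ B - n * δ := by
            intro t ht
            have := hT t ht
            rwa [max_eq_left hcase.le] at this
          have hnδ : 0 ≤ (n:ℝ) * δ := by positivity
          obtain ⟨T', hT'0, hT'⟩ := step (B - n*δ) T hcase.le (by linarith) hT0 hη
          refine ⟨T', hT'0, fun t ht => (hT' t ht).trans ?_⟩
          have hrw : B - n*δ - δ = B - (n+1 : ℕ)*δ := by push_cast; ring
          rw [hrw]
          exact le_max_left _ _
    obtain ⟨n, hn⟩ := exists_nat_ge (B/δ)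
    obtain ⟨T, hT0, hT⟩ := ind n
    refine ⟨T, hT0, fun t ht => (hT t ht).trans ?_⟩
    have hBn : B - n*δ ≤ 0 := by
      rw [div_le_iff₀ hδpos] at hn
      linarith
    rw [max_eq_right (hBn.trans hε.le)]
  -- conclude convergence
  rw [Metric.tendsto_atTop]
  intro ε hε
  obtain ⟨T, hT0, hT⟩ := key (min (ε/2) B) (lt_min (by positivity) hBpos) (min_le_right _ _)
  refine ⟨T, fun n hn => ?_⟩
  have hn0 : 0 ≤ n := hT0.trans hn
  have h1 := hT n hn
  have h2 := hVnonneg n hn0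
  have h3 : min (ε/2) B ≤ ε/2 := min_le_left _ _
  rw [dist_zero_right, Real.norm_eq_abs, abs_of_nonneg h2]
  linarith
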